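/- Let W be a standard one-dimensional Brownian motion and let f : [0,∞) × ℝ → ℝ be a continuous, strictly positive function. Assume that f satisfies the following two instances of the functional equation f(⟨X⟩_t, X_t) f(⟨Y⟩_t, Y_t) = f(⟨X+Y⟩_t, X_t + Y_t + ⟨X,Y⟩_t) on the class of stochastic integrals of deterministic indicator functions with respect to W: (i) for all 0 ≤ s ≤ t, almost surely f(s, W_s) · f(t − s, W_t − W_s) = f(t, W_t); and (ii) for every t ≥ 0, almost surely f(t, W_t)² = f(4t, 2W_t + t). Then there exists a constant c ∈ ℝ such that f(u, v) = exp(c v − (c/2) u) for all u ≥ 0 and v ∈ ℝ. -/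

import Mathlib

open MeasureTheory ProbabilityTheory Real
open scoped NNReal ENNReal

noncomputable section

variable {Ω : Type*} [mΩ : MeasurableSpace Ω]

/-- The σ-algebra generated by the process `W` up to time `t`. -/
def natSigma (W : ℝ → Ω → ℝ) (t : ℝ) : MeasurableSpace Ω :=
  ⨆ s ∈ Set.Icc (0 : ℝ) t, MeasurableSpace.comap (W s) inferInstance

/-- `W` is a standard one-dimensional Brownian motion under `P`. -/
structure IsStandardBM (P : Measure Ω) (W : ℝ → Ω → ℝ) : Prop where
  isProb : IsProbabilityMeasure P
  init : ∀ ω, W 0 ω = 0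
  cont : ∀ ω, Continuous fun t => W t ω
  meas : ∀ t, Measurable (W t)
  gauss : ∀ s t : ℝ, 0 ≤ s → s ≤ t →
    P.map (fun ω => W t ω - W s ω) = gaussianReal 0 (Real.toNNReal (t - s))
  indep : ∀ s t : ℝ, 0 ≤ s → s ≤ t →
    Indep (MeasurableSpace.comap (fun ω => W t ω - W s ω) inferInstance) (natSigma W s) P

/-- The natural filtration of the process `W`, indexed by nonnegative times. -/
def natFiltration (W : ℝ → Ω → ℝ) (hW : ∀ t, Measurable (W t)) :
    Filtration ℝ≥0 mΩ where
  seq t := natSigma W (t : ℝ)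
  mono' s t hst := biSup_mono fun u hu => ⟨hu.1, hu.2.trans (NNReal.coe_le_coe.mpr hst)⟩
  le' t := iSup₂_le fun s _ => measurable_iff_comap_le.mp (hW s)



theorem gaussianOpenPos' (v : ℝ≥0) (hv : v ≠ 0) : (gaussianReal 0 v).IsOpenPosMeasure := by
  have hac : (volume : Measure ℝ) ≪ gaussianReal 0 v := by
    rw [gaussianReal_of_var_ne_zero _ hv]
    exact withDensity_absolutelyContinuous' (measurable_gaussianPDF _ _).aemeasurable
      (ae_of_all _ fun x => (gaussianPDF_pos _ hv x).ne')
  exact hac.isOpenPosMeasure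

/-- Purely analytic part. -/
theorem analytic_part (f : ℝ → ℝ → ℝ)
    (hcont : ContinuousOn (Function.uncurry f) (Set.Ici (0 : ℝ) ×ˢ Set.univ))
    (hpos : ∀ u v : ℝ, 0 ≤ u → 0 < f u v)
    (hFE : ∀ s u : ℝ, 0 < s → 0 < u → ∀ a b : ℝ, f s a * f u b = f (s + u) (a + b))
    (hSQ : ∀ t : ℝ, 0 < t → ∀ v : ℝ, f t v ^ 2 = f (4 * t) (2 * v + t)) :
    ∃ c : ℝ, ∀ u v : ℝ, 0 ≤ u → f u v = Real.exp (c * v - c / 2 * u) := by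
  set g : ℝ → ℝ → ℝ := fun u v => Real.log (f u v) with hg_def
  have hslice : ∀ u : ℝ, 0 ≤ u → Continuous (fun v => f u v) := by
    intro u hu
    have h1 : ContinuousOn (fun v : ℝ => Function.uncurry f (u, v)) Set.univ :=
      hcont.comp (Continuous.continuousOn (by fun_prop)) (fun v _ => ⟨hu, trivial⟩)
    rw [← continuousOn_univ]
    exact h1
  have hgFE : ∀ s u : ℝ, 0 < s → 0 < u → ∀ a b : ℝ, g s a + g u b = g (s + u) (a + b) := by
    intro s u hs hu a b
    rw [hg_def]
    simp only
    rw [← Real.log_mul (hpos s a hs.le).ne' (hpos u b hu.le).ne', hFE s u hs hu]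
  -- translation structure: g u a = g u 0 + ψ a
  set ψ : ℝ → ℝ := fun a => g 1 a - g 1 0 with hψ_def
  have htrans : ∀ u : ℝ, 0 < u → ∀ a : ℝ, g u a = g u 0 + ψ a := by
    intro u hu a
    have h1 := hgFE u 1 hu one_pos a 0
    have h2 := hgFE u 1 hu one_pos 0 a
    rw [add_zero] at h1
    rw [zero_add] at h2
    rw [hψ_def]; simp only
    linarith
  have hψadd : ∀ a b : ℝ, ψ (a + b) = ψ a + ψ b := by
    intro a b
    have h1 := hgFE 1 1 one_pos one_pos a b
    have h2 := hgFE 1 1 one_pos one_pos 0 0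
    rw [add_zero] at h2
    have h3 := htrans 2 two_pos (a + b)
    have h4 := htrans 2 two_pos 0
    have : (1 : ℝ) + 1 = 2 := by norm_num
    rw [this] at h1 h2
    simp only [hψ_def] at h3 h4 ⊢
    linarith
  have hψcont : Continuous ψ := by
    have : Continuous fun a => Real.log (f 1 a) :=
      (hslice 1 one_pos.le).log (fun a => (hpos 1 a one_pos.le).ne')
    exact this.sub continuous_const
  -- ψ is linear
  obtain ⟨c, hc⟩ : ∃ c : ℝ, ∀ a : ℝ, ψ a = c * a := by
    set L := (AddMonoidHom.mk' ψ hψadd).toRealLinearMap hψcont with hL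
    refine ⟨L 1, fun a => ?_⟩
    have h1 : ψ a = L a := by
      rw [hL]; rfl
    have h2 : L a = a * L 1 := by
      calc L a = L (a • (1 : ℝ)) := by rw [smul_eq_mul, mul_one]
        _ = a • L 1 := L.map_smul a 1
        _ = a * L 1 := rfl
    rw [h1, h2]; ring
  -- determine g u 0 using the square equation
  have hm : ∀ t : ℝ, 0 < t → g t 0 = -(c / 2) * t := by
    intro t ht
    have hdouble : ∀ s : ℝ, 0 < s → g (s + s) 0 = 2 * g s 0 := by
      intro s hs
      have := hgFE s s hs hs 0 0
      rw [add_zero] at this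
      linarith
    have h4t : g (4 * t) 0 = 4 * g t 0 := by
      have h1 := hdouble t ht
      have h2 := hdouble (t + t) (by linarith)
      have : t + t + (t + t) = 4 * t := by ring
      rw [this] at h2
      rw [h2, h1]; ring
    have hsq := hSQ t ht 0
    have hlog : 2 * g t 0 = g (4 * t) (2 * 0 + t) := by
      rw [hg_def]; simp only
      rw [← hsq, Real.log_pow]
      norm_num
    rw [htrans (4 * t) (by linarith) (2 * 0 + t)] at hlog
    rw [h4t, hc] at hlog
    have : 2 * 0 + t = t := by ring
    rw [this] at hlog
    linarith
  -- conclude for u > 0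
  have main : ∀ u v : ℝ, 0 < u → f u v = Real.exp (c * v - c / 2 * u) := by
    intro u v hu
    have h1 : g u v = c * v - c / 2 * u := by
      rw [htrans u hu v, hm u hu, hc]; ring
    have := Real.exp_log (hpos u v hu.le)
    rw [hg_def] at h1
    simp only at h1
    rw [← this, h1]
  refine ⟨c, fun u v hu => ?_⟩
  rcases hu.lt_or_eq with h | h
  · exact main u v h
  · -- u = 0 : continuity
    subst h
    have hCW : ContinuousWithinAt (Function.uncurry f) (Set.Ici (0 : ℝ) ×ˢ Set.univ) (0, v) :=
      hcont (0, v) (by simp)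
    have htend : Filter.Tendsto (fun w : ℝ => (w, v)) (nhdsWithin 0 (Set.Ioi 0))
        (nhdsWithin (0, v) (Set.Ici (0 : ℝ) ×ˢ Set.univ)) := by
      apply tendsto_nhdsWithin_of_tendsto_nhds_of_eventually_within
      · exact ((continuous_id.prodMk continuous_const).tendsto 0).mono_left nhdsWithin_le_nhds
      · filter_upwards [self_mem_nhdsWithin] with w hw
        exact ⟨Set.mem_Ici.mpr hw.le, trivial⟩
    have h1 : Filter.Tendsto (fun w : ℝ => f w v) (nhdsWithin 0 (Set.Ioi 0)) (nhds (f 0 v)) :=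
      hCW.tendsto.comp htend
    have h2 : Filter.Tendsto (fun w : ℝ => f w v) (nhdsWithin 0 (Set.Ioi 0))
        (nhds (Real.exp (c * v - c / 2 * 0))) := by
      have heq : (fun w : ℝ => f w v) =ᶠ[nhdsWithin 0 (Set.Ioi 0)]
          fun w => Real.exp (c * v - c / 2 * w) := by
        filter_upwards [self_mem_nhdsWithin] with w hw
        exact main w v hw
      rw [Filter.tendsto_congr' heq]
      exact (Continuous.tendsto (by fun_prop) 0).mono_left nhdsWithin_le_nhds
    exact tendsto_nhds_unique h1 h2



/-- If a continuous strictly positive `f` satisfies the functional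
equations (i) and (ii) along Brownian motion, then `f (u, v) = exp (c v - (c/2) u)`. -/
theorem stmt0 (P : Measure Ω) (W : ℝ → Ω → ℝ) (hBM : IsStandardBM P W)
    (f : ℝ → ℝ → ℝ)
    (hcont : ContinuousOn (Function.uncurry f) (Set.Ici (0 : ℝ) ×ˢ Set.univ))
    (hpos : ∀ u v : ℝ, 0 ≤ u → 0 < f u v)
    (hfe : ∀ s t : ℝ, 0 ≤ s → s ≤ t →
      ∀ᵐ ω ∂P, f s (W s ω) * f (t - s) (W t ω - W s ω) = f t (W t ω))
    (hsq : ∀ t : ℝ, 0 ≤ t →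
      ∀ᵐ ω ∂P, (f t (W t ω)) ^ 2 = f (4 * t) (2 * W t ω + t)) :
    ∃ c : ℝ, ∀ u v : ℝ, 0 ≤ u → f u v = Real.exp (c * v - c / 2 * u) := by
  have key : (∀ t : ℝ, 0 < t → ∀ v : ℝ, f t v ^ 2 = f (4 * t) (2 * v + t)) ∧
      (∀ s u : ℝ, 0 < s → 0 < u → ∀ a b : ℝ, f s a * f u b = f (s + u) (a + b)) := by
    haveI := hBM.isProb
    have hslice : ∀ u : ℝ, 0 ≤ u → Continuous (fun v => f u v) := by
      intro u hu
      have h1 : ContinuousOn (fun v : ℝ => Function.uncurry f (u, v)) Set.univ :=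
        hcont.comp (Continuous.continuousOn (by fun_prop)) (fun v _ => by simp [hu])
      rw [← continuousOn_univ]
      exact h1
    have hlaw : ∀ t : ℝ, 0 ≤ t → P.map (W t) = gaussianReal 0 (Real.toNNReal t) := by
      intro t ht
      have h1 := hBM.gauss 0 t le_rfl ht
      simpa [hBM.init, sub_zero] using h1
    have hne : ∀ t : ℝ, 0 < t → Real.toNNReal t ≠ 0 := fun t ht => by
      simp [Real.toNNReal_eq_zero, not_le, ht]
    constructor
    · -- squared equation
      intro t ht
      have hFc : Continuous fun x : ℝ => f t x ^ 2 := (hslice t ht.le).pow 2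
      have hGc : Continuous fun x : ℝ => f (4 * t) (2 * x + t) :=
        (hslice (4 * t) (by linarith)).comp (by fun_prop)
      have hms : MeasurableSet {x : ℝ | f t x ^ 2 = f (4 * t) (2 * x + t)} :=
        measurableSet_eq_fun hFc.measurable hGc.measurable
      have h2 : ∀ᵐ x ∂(P.map (W t)), f t x ^ 2 = f (4 * t) (2 * x + t) :=
        (ae_map_iff (hBM.meas t).aemeasurable hms).mpr (hsq t ht.le)
      rw [hlaw t ht.le] at h2
      haveI := gaussianOpenPos' _ (hne t ht)
      have h3 := (Continuous.ae_eq_iff_eq (gaussianReal 0 (Real.toNNReal t)) hFc hGc).mp h2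
      exact fun v => congrFun h3 v
    · -- functional equation
      intro s u hs hu
      have hst : s ≤ s + u := by linarith
      have h1 := hfe s (s + u) hs.le hst
      have hd : s + u - s = u := by ring
      have hXm : Measurable (W s) := hBM.meas s
      have hYm : Measurable (fun ω => W (s + u) ω - W s ω) := (hBM.meas (s + u)).sub (hBM.meas s)
      have hindep : IndepFun (W s) (fun ω => W (s + u) ω - W s ω) P := by
        rw [IndepFun_iff_Indep]
        have h2 := hBM.indep s (s + u) hs.le hst
        rw [Indep_iff] at h2 ⊢
        intro t1 t2 ht1 ht2
        rw [Set.inter_comm, mul_comm]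
        have hle : MeasurableSpace.comap (W s) inferInstance ≤ natSigma W s :=
          le_biSup (fun r => MeasurableSpace.comap (W r) inferInstance) ⟨hs.le, le_rfl⟩
        exact h2 t2 t1 ht2 (hle t1 ht1)
      have hmap : P.map (fun ω => (W s ω, W (s + u) ω - W s ω))
          = (P.map (W s)).prod (P.map (fun ω => W (s + u) ω - W s ω)) :=
        (indepFun_iff_map_prod_eq_prod_map_map hXm.aemeasurable hYm.aemeasurable).mp hindep
      have hlaw2 : P.map (fun ω => W (s + u) ω - W s ω) = gaussianReal 0 (Real.toNNReal u) := by
        rw [hBM.gauss s (s + u) hs.le hst, hd]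
      have hFc : Continuous fun p : ℝ × ℝ => f s p.1 * f u p.2 :=
        ((hslice s hs.le).comp continuous_fst).mul ((hslice u hu.le).comp continuous_snd)
      have hGc : Continuous fun p : ℝ × ℝ => f (s + u) (p.1 + p.2) :=
        (hslice (s + u) (by linarith)).comp (continuous_fst.add continuous_snd)
      have hms : MeasurableSet {p : ℝ × ℝ | f s p.1 * f u p.2 = f (s + u) (p.1 + p.2)} :=
        measurableSet_eq_fun hFc.measurable hGc.measurable
      have hae : ∀ᵐ p : ℝ × ℝ ∂(P.map (fun ω => (W s ω, W (s + u) ω - W s ω))),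
          f s p.1 * f u p.2 = f (s + u) (p.1 + p.2) := by
        rw [ae_map_iff (hXm.prodMk hYm).aemeasurable hms]
        filter_upwards [h1] with ω hω
        rw [hd] at hω
        have he : W s ω + (W (s + u) ω - W s ω) = W (s + u) ω := by ring
        simp only [he]
        exact hω
      rw [hmap, hlaw s hs.le, hlaw2] at hae
      haveI := gaussianOpenPos' _ (hne s hs)
      haveI := gaussianOpenPos' _ (hne u hu)
      have heq := (Continuous.ae_eq_iff_eq
        ((gaussianReal 0 (Real.toNNReal s)).prod (gaussianReal 0 (Real.toNNReal u))) hFc hGc).mp hae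
      exact fun a b => congrFun heq (a, b)

  exact analytic_part f hcont hpos key.2 key.1

end
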